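/- arXiv:1612.08654 — 4 statements merged into one kernel-verified Lean document; each statement's English description precedes it below -/
import Mathlib

section
/- With d̂ as defined from the metric d via the t-ary chain construction, the sum Σ_{j=0}^{N-1} d̂(α, α·t^h + j mod N) over all j, where α = argmin over i ∈ {0,...,N-1} of (χ[σ=1]·d(i,n-1) + Σ_{j=0}^{N-1} d̂(i, i·t^h + j mod N)), satisfies: Σ_{j=0}^{n-1} d(α, j) ≤ χ[σ=1]·d(α, n-1) + Σ_{j=0}^{N-1} d̂(α, α·t^h + j mod N). -/
/-- The mod-`N` extension of a metric `d` on `{0,...,N-1}`. -/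
def dmod (d : ℕ → ℕ → ℝ) (N x y : ℕ) : ℝ := d (x % N) (y % N)

/-- The `r`-th digit of `j` in base `t`. -/
def digit (t j r : ℕ) : ℕ := j / t ^ r % t

/-- The pseudo-distance `d̂(i, i·t^h + j mod N)`, defined as the length of the
`t`-ary chain from `i` to `i·t^h + j` determined by the base-`t` digits of `j`. -/
def hatd (d : ℕ → ℕ → ℝ) (N t h i j : ℕ) : ℝ :=
  ∑ k ∈ Finset.range h,
    dmod d N
      (i * t ^ k + ∑ ℓ ∈ Finset.range k, digit t j (h - 1 - ℓ) * t ^ (k - 1 - ℓ))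
      (i * t ^ (k + 1) + ∑ ℓ ∈ Finset.range (k + 1), digit t j (h - 1 - ℓ) * t ^ (k - ℓ))

lemma digitsum (t j : ℕ) :
    ∀ m, ∑ r ∈ Finset.range m, j / t ^ r % t * t ^ r = j % t ^ m := by
  intro m
  induction m with
  | zero => simp [Nat.mod_one]
  | succ m ih =>
      rw [Finset.sum_range_succ, ih, pow_succ, Nat.mod_mul]
      ring

lemma chainlem (n N : ℕ) (hN0 : 0 < N) (hNn : N ≤ n) (d : ℕ → ℕ → ℝ)
    (hd0 : ∀ x < n, d x x = 0)
    (hdtri : ∀ x < n, ∀ y < n, ∀ z < n, d x z ≤ d x y + d y z)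
    (f : ℕ → ℕ) (m : ℕ) :
    dmod d N (f 0) (f m) ≤ ∑ k ∈ Finset.range m, dmod d N (f k) (f (k + 1)) := by
  induction m with
  | zero =>
      simp only [Finset.range_zero, Finset.sum_empty, dmod]
      exact le_of_eq (hd0 _ (lt_of_lt_of_le (Nat.mod_lt _ hN0) hNn))
  | succ m ih =>
      rw [Finset.sum_range_succ]
      have htr : dmod d N (f 0) (f (m + 1)) ≤
          dmod d N (f 0) (f m) + dmod d N (f m) (f (m + 1)) :=
        hdtri _ (lt_of_lt_of_le (Nat.mod_lt _ hN0) hNn) _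
          (lt_of_lt_of_le (Nat.mod_lt _ hN0) hNn) _
          (lt_of_lt_of_le (Nat.mod_lt _ hN0) hNn)
      linarith

/-- Eq. (20) ≤ Eq. (21) of Lemma 2: the total `d`-distance from the minimizer `α`
is at most `χ[σ=1]·d(α,n-1)` plus its total `d̂`-distance. -/
theorem stmt_6 (n h t σ N : ℕ) (hn : 2 ≤ n) (hh : 2 ≤ h)
    (ht : Nat.Prime t) (htl : ⌈(n : ℝ) ^ ((1 : ℝ) / h)⌉₊ ≤ t)
    (hσ : σ ≤ 1) (hco : Nat.Coprime t (n - σ)) (hNdef : N = n - σ)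
    (d : ℕ → ℕ → ℝ)
    (hd0 : ∀ x < n, d x x = 0)
    (hdpos : ∀ x < n, ∀ y < n, x ≠ y → 0 < d x y)
    (hdsymm : ∀ x < n, ∀ y < n, d x y = d y x)
    (hdtri : ∀ x < n, ∀ y < n, ∀ z < n, d x z ≤ d x y + d y z)
    (α : ℕ) (hα : α < N)
    (hαmin : ∀ i < N,
      (if σ = 1 then d α (n - 1) else 0) + ∑ j ∈ Finset.range N, hatd d N t h α j ≤
      (if σ = 1 then d i (n - 1) else 0) + ∑ j ∈ Finset.range N, hatd d N t h i j) :
    ∑ j ∈ Finset.range n, d α j ≤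
      (if σ = 1 then d α (n - 1) else 0) + ∑ j ∈ Finset.range N, hatd d N t h α j := by
  have hN0 : 0 < N := by omega
  have hNn : N ≤ n := by omega
  -- `n ≤ t ^ h`
  have hth : n ≤ t ^ h := by
    have hhr : (0 : ℝ) < (h : ℝ) := by positivity
    have h1 : (n : ℝ) ^ ((1 : ℝ) / h) ≤ t := Nat.ceil_le.mp htl
    have h2 : ((n : ℝ) ^ ((1 : ℝ) / h)) ^ h ≤ (t : ℝ) ^ h :=
      pow_le_pow_left₀ (Real.rpow_nonneg (by positivity) _) h1 h
    have h3 : ((n : ℝ) ^ ((1 : ℝ) / h)) ^ h = (n : ℝ) := by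
      rw [← Real.rpow_natCast ((n : ℝ) ^ ((1 : ℝ) / h)) h,
        ← Real.rpow_mul (by positivity), one_div,
        inv_mul_cancel₀ (ne_of_gt hhr), Real.rpow_one]
    rw [h3] at h2
    exact_mod_cast h2
  -- the key pointwise bound
  have key : ∀ j ∈ Finset.range N, d α ((α * t ^ h + j) % N) ≤ hatd d N t h α j := by
    intro j hj
    rw [Finset.mem_range] at hj
    set f : ℕ → ℕ := fun k =>
      α * t ^ k + ∑ ℓ ∈ Finset.range k, digit t j (h - 1 - ℓ) * t ^ (k - 1 - ℓ) with hf
    have hch := chainlem n N hN0 hNn d hd0 hdtri f h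
    have hf0 : f 0 = α := by simp [hf]
    have hfh : f h = α * t ^ h + j := by
      have hrefl : ∑ ℓ ∈ Finset.range h, digit t j (h - 1 - ℓ) * t ^ (h - 1 - ℓ) =
          ∑ r ∈ Finset.range h, digit t j r * t ^ r :=
        Finset.sum_range_reflect (fun r => digit t j r * t ^ r) h
      have hds : ∑ r ∈ Finset.range h, digit t j r * t ^ r = j % t ^ h := digitsum t j h
      have hjlt : j < t ^ h := lt_of_lt_of_le (lt_of_lt_of_le hj hNn) hth
      simp [hf, hrefl, hds, Nat.mod_eq_of_lt hjlt]
    have hhat : hatd d N t h α j = ∑ k ∈ Finset.range h, dmod d N (f k) (f (k + 1)) := by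
      unfold hatd
      refine Finset.sum_congr rfl fun k _ => ?_
      have : ∀ ℓ, k + 1 - 1 - ℓ = k - ℓ := fun ℓ => by omega
      simp [hf, this]
    rw [hf0, hfh] at hch
    rw [hhat]
    have : dmod d N α (α * t ^ h + j) = d α ((α * t ^ h + j) % N) := by
      rw [dmod, Nat.mod_eq_of_lt hα]
    rw [← this]
    exact hch
  -- rotation of the index
  have hrot : ∑ j ∈ Finset.range N, d α ((α * t ^ h + j) % N) =
      ∑ m ∈ Finset.range N, d α m := by
    set c := α * t ^ h % N with hc
    have hcN : c < N := Nat.mod_lt _ hN0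
    have hmodc : ∀ j, (α * t ^ h + j) % N = (c + j) % N := by
      intro j
      conv_lhs => rw [Nat.add_mod, ← hc]
      conv_rhs => rw [Nat.add_mod, Nat.mod_eq_of_lt hcN]
    simp only [hmodc]
    refine Finset.sum_nbij' (i := fun j => (c + j) % N) (j := fun m => (m + (N - c)) % N)
      ?_ ?_ ?_ ?_ ?_
    · intro a ha
      exact Finset.mem_range.mpr (Nat.mod_lt _ hN0)
    · intro b hb
      exact Finset.mem_range.mpr (Nat.mod_lt _ hN0)
    · intro a ha
      rw [Finset.mem_range] at ha
      show ((c + a) % N + (N - c)) % N = a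
      rcases Nat.lt_or_ge (c + a) N with hlt | hge
      · rw [Nat.mod_eq_of_lt hlt]
        have he : c + a + (N - c) = a + N := by omega
        rw [he, Nat.add_mod_right, Nat.mod_eq_of_lt ha]
      · have hm : (c + a) % N = c + a - N := by
          rw [Nat.mod_eq_sub_mod hge, Nat.mod_eq_of_lt (by omega)]
        rw [hm]
        have he : c + a - N + (N - c) = a := by omega
        rw [he, Nat.mod_eq_of_lt ha]
    · intro b hb
      rw [Finset.mem_range] at hb
      show (c + (b + (N - c)) % N) % N = b
      rcases Nat.lt_or_ge (b + (N - c)) N with hlt | hge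
      · rw [Nat.mod_eq_of_lt hlt]
        have he : c + (b + (N - c)) = b + N := by omega
        rw [he, Nat.add_mod_right, Nat.mod_eq_of_lt hb]
      · have hm : (b + (N - c)) % N = b - c := by
          rw [Nat.mod_eq_sub_mod hge, Nat.mod_eq_of_lt (by omega)]
          omega
        rw [hm]
        have he : c + (b - c) = b := by omega
        rw [he, Nat.mod_eq_of_lt hb]
    · intro a ha
      rfl
  have hmain : ∑ m ∈ Finset.range N, d α m ≤ ∑ j ∈ Finset.range N, hatd d N t h α j := by
    rw [← hrot]
    exact Finset.sum_le_sum key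
  interval_cases σ
  · have hnN : n = N := by omega
    simp only [Nat.zero_ne_one, if_false, zero_add, hnN]
    exact hmain
  · have hnN : n = N + 1 := by omega
    rw [if_pos rfl, hnN, Finset.sum_range_succ, Nat.add_sub_cancel]
    linarith
end

section
/- Let i' minimize Σ_{j=0}^{n-1} d(i,j) over i ∈ {0,...,N-1} and let α be as defined by minimizing χ[σ=1]·d(i,n-1) + Σ_j d̂(i, i·t^h+j mod N). Then χ[σ=1]·d(α,n-1) + Σ_{j=0}^{N-1} d̂(α, α·t^h + j mod N) ≤ 2h·(min_{i=0}^{N-1} Σ_{j=0}^{n-1} d(i,j)) − χ[σ=1]·((2h−1)·d(i',n−1) − (1/(n−1))·Σ_{j=0}^{n−2} d(i',j)). -/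
/-- Summing `f ((u * a + c) % N)` over `u < N` is the same as summing `f` over `{0,...,N-1}`,
when `a` is coprime to `N`. -/
private lemma sum_shift (N a c : ℕ) (hN : 0 < N) (hco : Nat.Coprime a N) (f : ℕ → ℝ) :
    ∑ u ∈ Finset.range N, f ((u * a + c) % N) = ∑ m ∈ Finset.range N, f m := by
  haveI : NeZero N := ⟨hN.ne'⟩
  have hinj : ∀ u ∈ Finset.range N, ∀ v ∈ Finset.range N,
      (u * a + c) % N = (v * a + c) % N → u = v := by
    intro u hu v hv huv
    have hu' := Finset.mem_range.mp hu
    have hv' := Finset.mem_range.mp hv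
    have hz : ((u * a + c : ℕ) : ZMod N) = ((v * a + c : ℕ) : ZMod N) := by
      rw [← ZMod.natCast_mod (u * a + c) N, ← ZMod.natCast_mod (v * a + c) N, huv]
    push_cast at hz
    have ha : IsUnit ((a : ZMod N)) := (ZMod.isUnit_iff_coprime a N).mpr hco
    have h2 : (u : ZMod N) * a = (v : ZMod N) * a := by
      exact add_right_cancel hz
    have h3 : (u : ZMod N) = v := ha.mul_right_cancel h2
    have := congrArg ZMod.val h3
    rwa [ZMod.val_natCast_of_lt hu', ZMod.val_natCast_of_lt hv'] at this
  have hsub : (Finset.range N).image (fun u => (u * a + c) % N) ⊆ Finset.range N := by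
    intro x hx
    obtain ⟨u, _, rfl⟩ := Finset.mem_image.mp hx
    exact Finset.mem_range.mpr (Nat.mod_lt _ hN)
  have himg : (Finset.range N).image (fun u => (u * a + c) % N) = Finset.range N := by
    apply Finset.eq_of_subset_of_card_le hsub
    rw [Finset.card_image_of_injOn fun u hu v hv => hinj u hu v hv, Finset.card_range]
  conv_rhs => rw [← himg]
  exact (Finset.sum_image hinj).symm

/-- Eq. (21) ≤ Eq. (22) of Lemma 2: the `χ[σ=1]`-corrected total `d̂`-distance from
the minimizer `α` is at most `2h` times the optimal total distance, minus the
`σ = 1` correction term. -/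
theorem stmt_7 (n h t σ N : ℕ) (hn : 2 ≤ n) (hh : 2 ≤ h)
    (ht : Nat.Prime t) (htl : ⌈(n : ℝ) ^ ((1 : ℝ) / h)⌉₊ ≤ t)
    (hσ : σ ≤ 1) (hco : Nat.Coprime t (n - σ)) (hNdef : N = n - σ)
    (d : ℕ → ℕ → ℝ)
    (hd0 : ∀ x < n, d x x = 0)
    (hdpos : ∀ x < n, ∀ y < n, x ≠ y → 0 < d x y)
    (hdsymm : ∀ x < n, ∀ y < n, d x y = d y x)
    (hdtri : ∀ x < n, ∀ y < n, ∀ z < n, d x z ≤ d x y + d y z)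
    (i' : ℕ) (hi' : i' < N)
    (hi'min : ∀ i < N, ∑ j ∈ Finset.range n, d i' j ≤ ∑ j ∈ Finset.range n, d i j)
    (α : ℕ) (hα : α < N)
    (hαmin : ∀ i < N,
      (if σ = 1 then d α (n - 1) else 0) + ∑ j ∈ Finset.range N, hatd d N t h α j ≤
      (if σ = 1 then d i (n - 1) else 0) + ∑ j ∈ Finset.range N, hatd d N t h i j) :
    (if σ = 1 then d α (n - 1) else 0) + ∑ j ∈ Finset.range N, hatd d N t h α j ≤
      2 * h * (∑ j ∈ Finset.range n, d i' j) -
      (if σ = 1 then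
        (2 * h - 1) * d i' (n - 1) -
          (1 / ((n : ℝ) - 1)) * ∑ j ∈ Finset.range (n - 1), d i' j
      else 0) := by
  have hNpos : 0 < N := by omega
  have hNn : N ≤ n := by omega
  have hNpos' : (0:ℝ) < N := by exact_mod_cast hNpos
  have hi'n : i' < n := lt_of_lt_of_le hi' hNn
  set S : ℝ := ∑ m ∈ Finset.range N, d i' m with hS
  have hcoN : Nat.Coprime t N := by rw [hNdef]; exact hco
  -- edge bound via the triangle inequality through i'
  have key : ∀ A B : ℕ, dmod d N A B ≤ d i' (A % N) + d i' (B % N) := by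
    intro A B
    have hA : A % N < n := lt_of_lt_of_le (Nat.mod_lt _ hNpos) hNn
    have hB : B % N < n := lt_of_lt_of_le (Nat.mod_lt _ hNpos) hNn
    unfold dmod
    calc d (A % N) (B % N) ≤ d (A % N) i' + d i' (B % N) := hdtri _ hA _ hi'n _ hB
      _ = d i' (A % N) + d i' (B % N) := by rw [hdsymm _ hA _ hi'n]
  have hshift : ∀ (k c : ℕ), ∑ u ∈ Finset.range N, d i' ((u * t ^ k + c) % N) = S :=
    fun k c => sum_shift N (t ^ k) c hNpos (hcoN.pow_left k) (d i')
  -- summing one chain over all starting points u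
  have hhat : ∀ j, ∑ u ∈ Finset.range N, hatd d N t h u j ≤ 2 * h * S := by
    intro j
    simp only [hatd]
    rw [Finset.sum_comm]
    have step : ∀ k ∈ Finset.range h,
        ∑ u ∈ Finset.range N,
          dmod d N
            (u * t ^ k + ∑ ℓ ∈ Finset.range k, digit t j (h - 1 - ℓ) * t ^ (k - 1 - ℓ))
            (u * t ^ (k + 1) + ∑ ℓ ∈ Finset.range (k + 1), digit t j (h - 1 - ℓ) * t ^ (k - ℓ))
          ≤ S + S := by
      intro k _
      calc ∑ u ∈ Finset.range N, dmod d N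
            (u * t ^ k + ∑ ℓ ∈ Finset.range k, digit t j (h - 1 - ℓ) * t ^ (k - 1 - ℓ))
            (u * t ^ (k + 1) + ∑ ℓ ∈ Finset.range (k + 1), digit t j (h - 1 - ℓ) * t ^ (k - ℓ))
          ≤ ∑ u ∈ Finset.range N,
            (d i' ((u * t ^ k + ∑ ℓ ∈ Finset.range k, digit t j (h - 1 - ℓ) * t ^ (k - 1 - ℓ)) % N)
              + d i' ((u * t ^ (k + 1) + ∑ ℓ ∈ Finset.range (k + 1), digit t j (h - 1 - ℓ) * t ^ (k - ℓ)) % N)) :=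
            Finset.sum_le_sum fun u _ => key _ _
        _ = S + S := by rw [Finset.sum_add_distrib, hshift k _, hshift (k + 1) _]
    calc ∑ k ∈ Finset.range h, ∑ u ∈ Finset.range N, dmod d N
            (u * t ^ k + ∑ ℓ ∈ Finset.range k, digit t j (h - 1 - ℓ) * t ^ (k - 1 - ℓ))
            (u * t ^ (k + 1) + ∑ ℓ ∈ Finset.range (k + 1), digit t j (h - 1 - ℓ) * t ^ (k - ℓ))
        ≤ ∑ _k ∈ Finset.range h, (S + S) := Finset.sum_le_sum step
      _ = 2 * h * S := by
          rw [Finset.sum_const, Finset.card_range]; push_cast; ring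
  -- total chain sum over all u and j
  have hsum2 : ∑ u ∈ Finset.range N, ∑ j ∈ Finset.range N, hatd d N t h u j
      ≤ (N : ℝ) * (2 * h * S) := by
    rw [Finset.sum_comm]
    calc ∑ j ∈ Finset.range N, ∑ u ∈ Finset.range N, hatd d N t h u j
        ≤ ∑ _j ∈ Finset.range N, 2 * h * S := Finset.sum_le_sum fun j _ => hhat j
      _ = (N : ℝ) * (2 * h * S) := by rw [Finset.sum_const, Finset.card_range, nsmul_eq_mul]
  -- averaging: N times the minimum is at most the total
  have havg : (N : ℝ) * ((if σ = 1 then d α (n - 1) else 0) + ∑ j ∈ Finset.range N, hatd d N t h α j)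
      ≤ ∑ u ∈ Finset.range N,
          ((if σ = 1 then d u (n - 1) else 0) + ∑ j ∈ Finset.range N, hatd d N t h u j) := by
    have h1 : ∑ _u ∈ Finset.range N,
        ((if σ = 1 then d α (n - 1) else 0) + ∑ j ∈ Finset.range N, hatd d N t h α j)
        ≤ ∑ u ∈ Finset.range N,
          ((if σ = 1 then d u (n - 1) else 0) + ∑ j ∈ Finset.range N, hatd d N t h u j) :=
      Finset.sum_le_sum fun u hu => hαmin u (Finset.mem_range.mp hu)
    rwa [Finset.sum_const, Finset.card_range, nsmul_eq_mul] at h1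
  interval_cases σ
  · -- σ = 0 : N = n
    have hNn' : N = n := by omega
    simp only [Nat.zero_ne_one, if_false, zero_add, sub_zero] at *
    have htot : ∑ u ∈ Finset.range N,
        ((0:ℝ) + ∑ j ∈ Finset.range N, hatd d N t h u j) ≤ (N : ℝ) * (2 * h * S) := by
      simpa using hsum2
    have h2 : (N : ℝ) * (∑ j ∈ Finset.range N, hatd d N t h α j) ≤ (N : ℝ) * (2 * h * S) := by
      calc (N : ℝ) * (∑ j ∈ Finset.range N, hatd d N t h α j)
          ≤ ∑ u ∈ Finset.range N, ((0:ℝ) + ∑ j ∈ Finset.range N, hatd d N t h u j) := by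
            simpa using havg
        _ ≤ (N : ℝ) * (2 * h * S) := htot
    have h3 : (∑ j ∈ Finset.range N, hatd d N t h α j) ≤ 2 * h * S :=
      le_of_mul_le_mul_left (by linarith) hNpos'
    subst hNn'
    simpa [hS] using h3
  · -- σ = 1 : N = n - 1
    have hNn1 : N = n - 1 := by omega
    have hn1 : n - 1 < n := by omega
    have hNr : (N : ℝ) = (n : ℝ) - 1 := by
      rw [hNn1]; push_cast [Nat.cast_sub (by omega : 1 ≤ n)]; ring
    simp only [if_pos rfl, if_true] at havg ⊢
    set D : ℝ := d i' (n - 1) with hD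
    -- bound the χ term
    have hχ : ∑ u ∈ Finset.range N, d u (n - 1) ≤ S + (N : ℝ) * D := by
      have : ∀ u ∈ Finset.range N, d u (n - 1) ≤ d i' u + D := by
        intro u hu
        have hu' : u < n := lt_of_lt_of_le (Finset.mem_range.mp hu) hNn
        calc d u (n - 1) ≤ d u i' + d i' (n - 1) := hdtri _ hu' _ hi'n _ hn1
          _ = d i' u + D := by rw [hdsymm _ hu' _ hi'n]
      calc ∑ u ∈ Finset.range N, d u (n - 1)
          ≤ ∑ u ∈ Finset.range N, (d i' u + D) := Finset.sum_le_sum this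
        _ = S + (N : ℝ) * D := by
            rw [Finset.sum_add_distrib, Finset.sum_const, Finset.card_range, nsmul_eq_mul]
    have htot : ∑ u ∈ Finset.range N,
        (d u (n - 1) + ∑ j ∈ Finset.range N, hatd d N t h u j)
        ≤ S + (N : ℝ) * D + (N : ℝ) * (2 * h * S) := by
      rw [Finset.sum_add_distrib]
      exact add_le_add hχ hsum2
    have h2 : (N : ℝ) * (d α (n - 1) + ∑ j ∈ Finset.range N, hatd d N t h α j)
        ≤ S + (N : ℝ) * D + (N : ℝ) * (2 * h * S) := le_trans havg htot
    -- rewrite the goal sums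
    have hsn : ∑ j ∈ Finset.range n, d i' j = S + D := by
      have : n = N + 1 := by omega
      rw [this, Finset.sum_range_succ, hS, hD, hNn1]
    have hsn1 : ∑ j ∈ Finset.range (n - 1), d i' j = S := by rw [← hNn1, hS]
    rw [hsn, hsn1]
    have hFle : d α (n - 1) + ∑ j ∈ Finset.range N, hatd d N t h α j
        ≤ (S + (N : ℝ) * D + (N : ℝ) * (2 * h * S)) / N := by
      rw [le_div_iff₀ hNpos']
      linarith [h2]
    have heq : (S + (N : ℝ) * D + (N : ℝ) * (2 * h * S)) / N
        = 2 * h * (S + D) - ((2 * h - 1) * D - 1 / ((n : ℝ) - 1) * S) := by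
      rw [← hNr]
      field_simp
      ring
    linarith [hFle, heq.symm.le]
end

section
/- With α defined as the minimizer of χ[σ=1]·d(i,n−1) + Σ_{j=0}^{N−1} d̂(i, i·t^h + j mod N) over i ∈ {0,...,N−1}: if χ[σ=1]·d(α,n−1) + Σ_{j=0}^{N−1} d̂(α, α·t^h + j mod N) < Σ_{j=0}^{n−1} d(n−1, j), then Σ_{j=0}^{n−1} d(α, j) ≤ 2h · min_{i=0}^{n−1} Σ_{j=0}^{n−1} d(i,j); otherwise Σ_{j=0}^{n−1} d(n−1, j) ≤ 2h · min_{i=0}^{n−1} Σ_{j=0}^{n−1} d(i,j). -/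
lemma sum_range_zmod {N : ℕ} [NeZero N] (g : ZMod N → ℝ) :
    ∑ i ∈ Finset.range N, g ((i : ℕ) : ZMod N) = ∑ x : ZMod N, g x := by
  refine Finset.sum_nbij' (fun a => ((a : ℕ) : ZMod N)) (fun x => x.val) ?_ ?_ ?_ ?_ ?_
  · intro a _; exact Finset.mem_univ _
  · intro x _; exact Finset.mem_range.mpr (ZMod.val_lt x)
  · intro a ha
    show ((a : ℕ) : ZMod N).val = a
    rw [ZMod.val_natCast]
    exact Nat.mod_eq_of_lt (Finset.mem_range.mp ha)
  · intro x _; exact ZMod.natCast_rightInverse x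
  · intro a _; rfl

lemma sum_affine_mod {N : ℕ} (hN : 0 < N) (c q : ℕ) (hc : Nat.Coprime c N) (f : ℕ → ℝ) :
    ∑ i ∈ Finset.range N, f ((i * c + q) % N) = ∑ v ∈ Finset.range N, f v := by
  haveI : NeZero N := ⟨hN.ne'⟩
  have h1 : ∀ i : ℕ, (i * c + q) % N = ((i : ZMod N) * (c : ZMod N) + (q : ZMod N)).val := by
    intro i
    have : ((i * c + q : ℕ) : ZMod N) = (i : ZMod N) * c + q := by push_cast; ring
    rw [← this, ZMod.val_natCast]
  have h2 : ∑ i ∈ Finset.range N, f ((i * c + q) % N)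
      = ∑ x : ZMod N, f ((x * c + q).val) := by
    rw [← sum_range_zmod (fun x : ZMod N => f ((x * c + q).val))]
    exact Finset.sum_congr rfl fun i _ => by rw [h1]
  have h3 : ∑ v ∈ Finset.range N, f v = ∑ x : ZMod N, f x.val := by
    rw [← sum_range_zmod (fun x : ZMod N => f x.val)]
    refine Finset.sum_congr rfl fun i hi => ?_
    rw [ZMod.val_natCast, Nat.mod_eq_of_lt (Finset.mem_range.mp hi)]
  rw [h2, h3]
  have hu : IsUnit ((c : ℕ) : ZMod N) :=
    ⟨ZMod.unitOfCoprime c hc, ZMod.coe_unitOfCoprime c hc⟩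
  calc ∑ x : ZMod N, f ((x * c + q).val)
      = ∑ x : ZMod N,
        (fun y : ZMod N => f y.val)
          (((Units.mulRight hu.unit).trans (Equiv.addRight ((q : ℕ) : ZMod N))) x) := by
        refine Finset.sum_congr rfl fun x _ => ?_
        simp [Units.mulRight, Equiv.addRight, IsUnit.unit_spec]
    _ = ∑ y : ZMod N, f y.val :=
        Equiv.sum_comp ((Units.mulRight hu.unit).trans (Equiv.addRight ((q : ℕ) : ZMod N)))
          (fun y : ZMod N => f y.val)

lemma digit_sum (t j : ℕ) : ∀ H : ℕ, ∑ r ∈ Finset.range H, digit t j r * t ^ r = j % t ^ H := by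
  intro H
  induction H with
  | zero => simp [Nat.mod_one]
  | succ H ih =>
      rw [Finset.sum_range_succ, ih]
      have h1 : j % t ^ (H + 1) = t ^ H * (j / t ^ H % t) + j % t ^ H := by
        conv_lhs => rw [← Nat.div_add_mod (j % t ^ (H + 1)) (t ^ H)]
        rw [pow_succ, Nat.mod_mul_right_div_self,
          Nat.mod_mod_of_dvd _ (Dvd.intro t rfl)]
      rw [h1, digit]
      ring

lemma digit_sum_reflect (t j H : ℕ) :
    ∑ ℓ ∈ Finset.range H, digit t j (H - 1 - ℓ) * t ^ (H - 1 - ℓ) = j % t ^ H := by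
  rw [Finset.sum_range_reflect (fun r => digit t j r * t ^ r) H]
  exact digit_sum t j H

lemma chain_bound (n N : ℕ) (d : ℕ → ℕ → ℝ) (hN : 0 < N) (hNn : N ≤ n)
    (hd0 : ∀ x < n, d x x = 0)
    (hdtri : ∀ x < n, ∀ y < n, ∀ z < n, d x z ≤ d x y + d y z)
    (g : ℕ → ℕ) (H : ℕ) :
    dmod d N (g 0) (g H) ≤ ∑ k ∈ Finset.range H, dmod d N (g k) (g (k + 1)) := by
  have hm : ∀ x : ℕ, x % N < n := fun x => lt_of_lt_of_le (Nat.mod_lt x hN) hNn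
  induction H with
  | zero =>
      simp only [Finset.range_zero, Finset.sum_empty]
      exact le_of_eq (hd0 _ (hm _))
  | succ H ih =>
      rw [Finset.sum_range_succ]
      have htr : dmod d N (g 0) (g (H + 1))
          ≤ dmod d N (g 0) (g H) + dmod d N (g H) (g (H + 1)) :=
        hdtri _ (hm _) _ (hm _) _ (hm _)
      linarith

/-- The averaged upper bound: summed over all starting points `i`, the chain sums are at
most `2·h·N` times the cost of any point `m`. -/
lemma avg_bound (n N t h : ℕ) (d : ℕ → ℕ → ℝ) (hN : 0 < N) (hNn : N ≤ n)
    (hco : Nat.Coprime t N)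
    (hdsymm : ∀ x < n, ∀ y < n, d x y = d y x)
    (hdtri : ∀ x < n, ∀ y < n, ∀ z < n, d x z ≤ d x y + d y z)
    (m : ℕ) (hm : m < N) :
    ∑ i ∈ Finset.range N, ∑ j ∈ Finset.range N, hatd d N t h i j
      ≤ 2 * h * N * ∑ v ∈ Finset.range N, d m v := by
  have hmn : m < n := lt_of_lt_of_le hm hNn
  have hmod : ∀ x : ℕ, x % N < n := fun x => lt_of_lt_of_le (Nat.mod_lt x hN) hNn
  have hswap : ∑ i ∈ Finset.range N, ∑ j ∈ Finset.range N, hatd d N t h i j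
      = ∑ j ∈ Finset.range N, ∑ k ∈ Finset.range h, ∑ i ∈ Finset.range N,
          dmod d N
            (i * t ^ k + ∑ ℓ ∈ Finset.range k, digit t j (h - 1 - ℓ) * t ^ (k - 1 - ℓ))
            (i * t ^ (k + 1) +
              ∑ ℓ ∈ Finset.range (k + 1), digit t j (h - 1 - ℓ) * t ^ (k - ℓ)) := by
    rw [Finset.sum_comm]
    exact Finset.sum_congr rfl fun j _ => Finset.sum_comm
  rw [hswap]
  have hkey : ∀ j k : ℕ, ∑ i ∈ Finset.range N,
      dmod d N
        (i * t ^ k + ∑ ℓ ∈ Finset.range k, digit t j (h - 1 - ℓ) * t ^ (k - 1 - ℓ))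
        (i * t ^ (k + 1) +
          ∑ ℓ ∈ Finset.range (k + 1), digit t j (h - 1 - ℓ) * t ^ (k - ℓ))
      ≤ 2 * ∑ v ∈ Finset.range N, d m v := by
    intro j k
    set P := ∑ ℓ ∈ Finset.range k, digit t j (h - 1 - ℓ) * t ^ (k - 1 - ℓ) with hP
    set Q := ∑ ℓ ∈ Finset.range (k + 1), digit t j (h - 1 - ℓ) * t ^ (k - ℓ) with hQ
    have step1 : ∑ i ∈ Finset.range N, dmod d N (i * t ^ k + P) (i * t ^ (k + 1) + Q)
        ≤ ∑ i ∈ Finset.range N,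
            (d ((i * t ^ k + P) % N) m + d m ((i * t ^ (k + 1) + Q) % N)) := by
      refine Finset.sum_le_sum fun i _ => ?_
      exact hdtri _ (hmod _) _ hmn _ (hmod _)
    have step2 : ∑ i ∈ Finset.range N, d ((i * t ^ k + P) % N) m
        = ∑ v ∈ Finset.range N, d v m :=
      sum_affine_mod hN (t ^ k) P (Nat.Coprime.pow_left k hco) (fun v => d v m)
    have step3 : ∑ i ∈ Finset.range N, d m ((i * t ^ (k + 1) + Q) % N)
        = ∑ v ∈ Finset.range N, d m v :=
      sum_affine_mod hN (t ^ (k + 1)) Q (Nat.Coprime.pow_left (k + 1) hco) (fun v => d m v)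
    have step4 : ∑ v ∈ Finset.range N, d v m = ∑ v ∈ Finset.range N, d m v :=
      Finset.sum_congr rfl fun v hv =>
        hdsymm v (lt_of_lt_of_le (Finset.mem_range.mp hv) hNn) m hmn
    calc ∑ i ∈ Finset.range N, dmod d N (i * t ^ k + P) (i * t ^ (k + 1) + Q)
        ≤ ∑ i ∈ Finset.range N,
            (d ((i * t ^ k + P) % N) m + d m ((i * t ^ (k + 1) + Q) % N)) := step1
      _ = (∑ i ∈ Finset.range N, d ((i * t ^ k + P) % N) m)
          + ∑ i ∈ Finset.range N, d m ((i * t ^ (k + 1) + Q) % N) :=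
            Finset.sum_add_distrib
      _ = 2 * ∑ v ∈ Finset.range N, d m v := by rw [step2, step3, step4]; ring
  calc ∑ j ∈ Finset.range N, ∑ k ∈ Finset.range h, ∑ i ∈ Finset.range N,
        dmod d N
          (i * t ^ k + ∑ ℓ ∈ Finset.range k, digit t j (h - 1 - ℓ) * t ^ (k - 1 - ℓ))
          (i * t ^ (k + 1) +
            ∑ ℓ ∈ Finset.range (k + 1), digit t j (h - 1 - ℓ) * t ^ (k - ℓ))
      ≤ ∑ _j ∈ Finset.range N, ∑ _k ∈ Finset.range h,
          2 * ∑ v ∈ Finset.range N, d m v := by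
        refine Finset.sum_le_sum fun j _ => Finset.sum_le_sum fun k _ => hkey j k
    _ = 2 * h * N * ∑ v ∈ Finset.range N, d m v := by
        rw [Finset.sum_const, Finset.sum_const, Finset.card_range, Finset.card_range,
          smul_smul, nsmul_eq_mul]
        push_cast
        ring

/-- The lower bound: the chain sums dominate the true cost of the starting point. -/
lemma lb_bound (n N t h : ℕ) (d : ℕ → ℕ → ℝ) (hN : 0 < N) (hNn : N ≤ n)
    (hNT : N ≤ t ^ h)
    (hd0 : ∀ x < n, d x x = 0)
    (hdtri : ∀ x < n, ∀ y < n, ∀ z < n, d x z ≤ d x y + d y z)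
    (i : ℕ) (hi : i < N) :
    ∑ v ∈ Finset.range N, d i v ≤ ∑ j ∈ Finset.range N, hatd d N t h i j := by
  have step1 : ∀ j ∈ Finset.range N, d i ((i * t ^ h + j) % N) ≤ hatd d N t h i j := by
    intro j hj
    have hjN : j < N := Finset.mem_range.mp hj
    set g : ℕ → ℕ := fun k =>
      i * t ^ k + ∑ ℓ ∈ Finset.range k, digit t j (h - 1 - ℓ) * t ^ (k - 1 - ℓ) with hg
    have hchain := chain_bound n N d hN hNn hd0 hdtri g h
    have hEq : hatd d N t h i j = ∑ k ∈ Finset.range h, dmod d N (g k) (g (k + 1)) := by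
      refine Finset.sum_congr rfl fun k _ => ?_
      have : g (k + 1) = i * t ^ (k + 1) +
          ∑ ℓ ∈ Finset.range (k + 1), digit t j (h - 1 - ℓ) * t ^ (k - ℓ) := by
        simp [hg, Nat.add_sub_cancel]
      rw [this]
    have hg0 : g 0 = i := by simp [hg]
    have hgh : g h = i * t ^ h + j := by
      simp only [hg]
      rw [digit_sum_reflect, Nat.mod_eq_of_lt (lt_of_lt_of_le hjN hNT)]
    have hfin : dmod d N (g 0) (g h) = d i ((i * t ^ h + j) % N) := by
      rw [hg0, hgh, dmod, Nat.mod_eq_of_lt hi]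
    rw [hEq, ← hfin]
    exact hchain
  have step2 : ∑ j ∈ Finset.range N, d i ((i * t ^ h + j) % N)
      = ∑ v ∈ Finset.range N, d i v := by
    have hcomm : ∀ j : ℕ, i * t ^ h + j = j * 1 + i * t ^ h := fun j => by ring
    calc ∑ j ∈ Finset.range N, d i ((i * t ^ h + j) % N)
        = ∑ j ∈ Finset.range N, d i ((j * 1 + i * t ^ h) % N) :=
          Finset.sum_congr rfl fun j _ => by rw [hcomm]
      _ = ∑ v ∈ Finset.range N, d i v :=
          sum_affine_mod hN 1 (i * t ^ h) (Nat.coprime_one_left N) (fun v => d i v)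
  calc ∑ v ∈ Finset.range N, d i v
      = ∑ j ∈ Finset.range N, d i ((i * t ^ h + j) % N) := step2.symm
    _ ≤ ∑ j ∈ Finset.range N, hatd d N t h i j := Finset.sum_le_sum step1

/-- The arithmetic endgame. -/
lemma endgame {H Nr F C β X : ℝ} (hH : 2 ≤ H) (hN : 1 ≤ Nr)
    (hXF : X ≤ F) (hAvg : Nr * X ≤ F + 2 * H * Nr * C) (hF : F ≤ C + Nr * β)
    (hC : 0 ≤ C) (hβ : 0 ≤ β) :
    X ≤ 2 * H * C + 2 * H * β := by
  by_contra hcon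
  push_neg at hcon
  have hNpos : (0 : ℝ) < Nr := by linarith
  have e1 : 2 * H * C + 2 * H * β < C + Nr * β := by linarith
  have e2 : Nr * (2 * H * C + 2 * H * β) < Nr * X := mul_lt_mul_of_pos_left hcon hNpos
  have e3 : 2 * H * Nr * β < C + Nr * β := by nlinarith
  have e4 : (2 * H - 1) * (Nr * β) < C := by nlinarith
  have hpos : (0 : ℝ) < 2 * H - 1 := by linarith
  have e5 : (2 * H - 1) * ((2 * H - 1) * (Nr * β)) < (2 * H - 1) * C :=
    mul_lt_mul_of_pos_left e4 hpos
  have e6 : (2 * H - 1) * C < (Nr - 2 * H) * β := by nlinarith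
  have hNβ : 0 ≤ Nr * β := mul_nonneg hNpos.le hβ
  nlinarith [mul_nonneg hNβ (by linarith : (0:ℝ) ≤ H - 2),
    mul_nonneg hβ (by linarith : (0:ℝ) ≤ H - 2)]

/-- Lemma 3: selecting a `(2h)`-approximate `1`-median from `{α, n-1}`. -/
theorem stmt_8 (n h t σ N : ℕ) (hn : 2 ≤ n) (hh : 2 ≤ h)
    (ht : Nat.Prime t) (htl : ⌈(n : ℝ) ^ ((1 : ℝ) / h)⌉₊ ≤ t)
    (hσ : σ ≤ 1) (hco : Nat.Coprime t (n - σ)) (hNdef : N = n - σ)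
    (d : ℕ → ℕ → ℝ)
    (hd0 : ∀ x < n, d x x = 0)
    (hdpos : ∀ x < n, ∀ y < n, x ≠ y → 0 < d x y)
    (hdsymm : ∀ x < n, ∀ y < n, d x y = d y x)
    (hdtri : ∀ x < n, ∀ y < n, ∀ z < n, d x z ≤ d x y + d y z)
    (α : ℕ) (hα : α < N)
    (hαmin : ∀ i < N,
      (if σ = 1 then d α (n - 1) else 0) + ∑ j ∈ Finset.range N, hatd d N t h α j ≤
      (if σ = 1 then d i (n - 1) else 0) + ∑ j ∈ Finset.range N, hatd d N t h i j) :
    ((if σ = 1 then d α (n - 1) else 0) + ∑ j ∈ Finset.range N, hatd d N t h α j <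
        ∑ j ∈ Finset.range n, d (n - 1) j →
      ∀ i < n, ∑ j ∈ Finset.range n, d α j ≤ 2 * h * ∑ j ∈ Finset.range n, d i j) ∧
    (¬((if σ = 1 then d α (n - 1) else 0) + ∑ j ∈ Finset.range N, hatd d N t h α j <
        ∑ j ∈ Finset.range n, d (n - 1) j) →
      ∀ i < n, ∑ j ∈ Finset.range n, d (n - 1) j ≤ 2 * h * ∑ j ∈ Finset.range n, d i j) := by
  have hNpos : 0 < N := by omega
  have hNn : N ≤ n := by omega
  have hcoN : Nat.Coprime t N := by rw [hNdef]; exact hco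
  have hdnn : ∀ x, x < n → ∀ y, y < n → 0 ≤ d x y := by
    intro x hx y hy
    rcases eq_or_ne x y with rfl | hne
    · exact le_of_eq (hd0 x hx).symm
    · exact (hdpos x hx y hy hne).le
  have hhR : (2 : ℝ) ≤ (h : ℝ) := by exact_mod_cast hh
  have hNR : (1 : ℝ) ≤ (N : ℝ) := by exact_mod_cast hNpos
  have hth : n ≤ t ^ h := by
    have hx : (0 : ℝ) ≤ (n : ℝ) ^ ((1 : ℝ) / h) := Real.rpow_nonneg (Nat.cast_nonneg n) _
    have h1 : ((n : ℝ) ^ ((1 : ℝ) / h)) ≤ (t : ℝ) :=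
      le_trans (Nat.le_ceil _) (by exact_mod_cast htl)
    have h2 : ((n : ℝ) ^ ((1 : ℝ) / h)) ^ (h : ℕ) ≤ (t : ℝ) ^ (h : ℕ) :=
      pow_le_pow_left₀ hx h1 h
    have h3 : ((n : ℝ) ^ ((1 : ℝ) / h)) ^ (h : ℕ) = (n : ℝ) := by
      rw [← Real.rpow_natCast ((n : ℝ) ^ ((1 : ℝ) / h)) h, ← Real.rpow_mul (Nat.cast_nonneg n)]
      rw [one_div, inv_mul_cancel₀ (by positivity : ((h : ℕ) : ℝ) ≠ 0), Real.rpow_one]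
    rw [h3] at h2
    exact_mod_cast h2
  have hNT : N ≤ t ^ h := le_trans hNn hth
  have hsummin : (N : ℝ) *
      ((if σ = 1 then d α (n - 1) else 0) + ∑ j ∈ Finset.range N, hatd d N t h α j)
      ≤ ∑ i ∈ Finset.range N,
        ((if σ = 1 then d i (n - 1) else 0) + ∑ j ∈ Finset.range N, hatd d N t h i j) := by
    have := Finset.sum_le_sum (fun i hi => hαmin i (Finset.mem_range.mp hi))
    rwa [Finset.sum_const, Finset.card_range, nsmul_eq_mul] at this
  rcases Nat.le_one_iff_eq_zero_or_eq_one.mp hσ with hσ0 | hσ1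
  · -- σ = 0 : N = n
    subst hσ0
    have hNn' : N = n := by omega
    subst hNn'
    simp only [if_neg (by decide : ¬(0 = 1)), zero_add] at hsummin hαmin ⊢
    have hLB : ∑ v ∈ Finset.range N, d α v ≤ ∑ j ∈ Finset.range N, hatd d N t h α j :=
      lb_bound N N t h d hNpos le_rfl hNT hd0 hdtri α hα
    have hkey : ∀ m, m < N →
        ∑ j ∈ Finset.range N, hatd d N t h α j ≤ 2 * h * ∑ v ∈ Finset.range N, d m v := by
      intro m hm
      have hsum : ∑ i ∈ Finset.range N, ∑ j ∈ Finset.range N, hatd d N t h i j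
          ≤ 2 * h * N * ∑ v ∈ Finset.range N, d m v :=
        avg_bound N N t h d hNpos le_rfl hcoN hdsymm hdtri m hm
      have h2 : (N : ℝ) * (∑ j ∈ Finset.range N, hatd d N t h α j)
          ≤ (N : ℝ) * (2 * h * ∑ v ∈ Finset.range N, d m v) := by
        calc (N : ℝ) * (∑ j ∈ Finset.range N, hatd d N t h α j)
            ≤ ∑ i ∈ Finset.range N, ∑ j ∈ Finset.range N, hatd d N t h i j := hsummin
          _ ≤ 2 * h * N * ∑ v ∈ Finset.range N, d m v := hsum
          _ = (N : ℝ) * (2 * h * ∑ v ∈ Finset.range N, d m v) := by ring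
      exact le_of_mul_le_mul_left h2 (by linarith : (0 : ℝ) < (N : ℝ))
    constructor
    · intro _ i hi
      exact le_trans hLB (hkey i hi)
    · intro hcase i hi
      push_neg at hcase
      exact le_trans hcase (hkey i hi)
  · -- σ = 1 : N = n - 1
    subst hσ1
    have hnN : n = N + 1 := by omega
    subst hnN
    simp only [reduceIte, Nat.add_sub_cancel] at hsummin hαmin ⊢
    have hNlt : N < N + 1 := Nat.lt_succ_self N
    have hFsplit : ∑ j ∈ Finset.range (N + 1), d N j = ∑ j ∈ Finset.range N, d N j := by
      rw [Finset.sum_range_succ, hd0 N hNlt, add_zero]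
    have hLB : ∑ j ∈ Finset.range (N + 1), d α j
        ≤ d α N + ∑ j ∈ Finset.range N, hatd d N t h α j := by
      rw [Finset.sum_range_succ]
      have := lb_bound (N + 1) N t h d hNpos (Nat.le_succ N) hNT hd0 hdtri α hα
      linarith
    have hAVG : ∀ m, m < N → (N : ℝ) *
        (d α N + ∑ j ∈ Finset.range N, hatd d N t h α j)
        ≤ (∑ j ∈ Finset.range (N + 1), d N j)
          + 2 * h * N * ∑ v ∈ Finset.range N, d m v := by
      intro m hm
      have havg := avg_bound (N + 1) N t h d hNpos (Nat.le_succ N) hcoN hdsymm hdtri m hm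
      have hsplit : ∑ i ∈ Finset.range N,
          (d i N + ∑ j ∈ Finset.range N, hatd d N t h i j)
          = (∑ i ∈ Finset.range N, d i N)
            + ∑ i ∈ Finset.range N, ∑ j ∈ Finset.range N, hatd d N t h i j :=
        Finset.sum_add_distrib
      have hFsymm : ∑ i ∈ Finset.range N, d i N = ∑ j ∈ Finset.range N, d N j :=
        Finset.sum_congr rfl fun i hi =>
          hdsymm i (lt_of_lt_of_le (Finset.mem_range.mp hi) (Nat.le_succ N)) N hNlt
      calc (N : ℝ) * (d α N + ∑ j ∈ Finset.range N, hatd d N t h α j)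
          ≤ ∑ i ∈ Finset.range N, (d i N + ∑ j ∈ Finset.range N, hatd d N t h i j) :=
            hsummin
        _ = (∑ i ∈ Finset.range N, d i N)
            + ∑ i ∈ Finset.range N, ∑ j ∈ Finset.range N, hatd d N t h i j := hsplit
        _ ≤ (∑ j ∈ Finset.range (N + 1), d N j)
            + 2 * h * N * ∑ v ∈ Finset.range N, d m v := by
            rw [hFsplit, ← hFsymm]
            linarith
    have hFC : ∀ m, m < N → (∑ j ∈ Finset.range (N + 1), d N j)
        ≤ (∑ v ∈ Finset.range N, d m v) + (N : ℝ) * d m N := by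
      intro m hm
      rw [hFsplit]
      have hmn : m < N + 1 := lt_trans hm hNlt
      have htri : ∀ j ∈ Finset.range N, d N j ≤ d N m + d m j := by
        intro j hj
        exact hdtri N hNlt m hmn j (lt_trans (Finset.mem_range.mp hj) hNlt)
      calc ∑ j ∈ Finset.range N, d N j ≤ ∑ j ∈ Finset.range N, (d N m + d m j) :=
            Finset.sum_le_sum htri
        _ = (N : ℝ) * d N m + ∑ j ∈ Finset.range N, d m j := by
            rw [Finset.sum_add_distrib, Finset.sum_const, Finset.card_range, nsmul_eq_mul]
        _ = (∑ v ∈ Finset.range N, d m v) + (N : ℝ) * d m N := by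
            rw [hdsymm N hNlt m hmn]; ring
    have hCnn : ∀ m, m < N → (0 : ℝ) ≤ ∑ v ∈ Finset.range N, d m v := by
      intro m hm
      exact Finset.sum_nonneg fun v hv =>
        hdnn m (lt_trans hm hNlt) v (lt_trans (Finset.mem_range.mp hv) hNlt)
    have hFnn : (0 : ℝ) ≤ ∑ j ∈ Finset.range (N + 1), d N j :=
      Finset.sum_nonneg fun v hv => hdnn N hNlt v (Finset.mem_range.mp hv)
    have hRHS : ∀ m, m < N → ∑ j ∈ Finset.range (N + 1), d m j
        = (∑ v ∈ Finset.range N, d m v) + d m N := fun m _ => Finset.sum_range_succ _ N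
    constructor
    · -- case 1 : output α
      intro hcase i hi
      rcases Nat.lt_succ_iff_lt_or_eq.mp hi with hiN | hieq
      · have hend : (d α N + ∑ j ∈ Finset.range N, hatd d N t h α j)
            ≤ 2 * h * (∑ v ∈ Finset.range N, d i v) + 2 * h * d i N := by
          have hβnn : (0 : ℝ) ≤ d i N := hdnn i (lt_trans hiN hNlt) N hNlt
          have := endgame hhR hNR (le_of_lt hcase) (hAVG i hiN) (hFC i hiN) (hCnn i hiN) hβnn
          linarith
        rw [hRHS i hiN]
        calc ∑ j ∈ Finset.range (N + 1), d α j
            ≤ d α N + ∑ j ∈ Finset.range N, hatd d N t h α j := hLB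
          _ ≤ 2 * h * (∑ v ∈ Finset.range N, d i v) + 2 * h * d i N := hend
          _ = 2 * h * ((∑ v ∈ Finset.range N, d i v) + d i N) := by ring
      · rw [hieq]
        have h1 : ∑ j ∈ Finset.range (N + 1), d α j < ∑ j ∈ Finset.range (N + 1), d N j :=
          lt_of_le_of_lt hLB hcase
        nlinarith [hFnn, hhR]
    · -- case 2 : output n - 1
      intro hcase i hi
      push_neg at hcase
      rcases Nat.lt_succ_iff_lt_or_eq.mp hi with hiN | hieq
      · have hAvgF : (N : ℝ) * (∑ j ∈ Finset.range (N + 1), d N j)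
            ≤ (∑ j ∈ Finset.range (N + 1), d N j)
              + 2 * h * N * ∑ v ∈ Finset.range N, d i v := by
          calc (N : ℝ) * (∑ j ∈ Finset.range (N + 1), d N j)
              ≤ (N : ℝ) * (d α N + ∑ j ∈ Finset.range N, hatd d N t h α j) := by
                nlinarith
            _ ≤ (∑ j ∈ Finset.range (N + 1), d N j)
                + 2 * h * N * ∑ v ∈ Finset.range N, d i v := hAVG i hiN
        have hβnn : (0 : ℝ) ≤ d i N := hdnn i (lt_trans hiN hNlt) N hNlt
        have hend := endgame hhR hNR le_rfl hAvgF (hFC i hiN) (hCnn i hiN) hβnn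
        rw [hRHS i hiN]
        linarith
      · rw [hieq]
        nlinarith [hFnn, hhR]
end

section
/- Suppose (2h−1)·d(i', n−1) < (1/(n−1))·Σ_{m=0}^{n−2} d(i', m), where i' minimizes Σ_{j=0}^{n−1} d(i,j) over i ∈ {0,...,n−2} and h ≥ 2. Then Σ_{j=0}^{n−1} d(n−1, j) ≤ 2·Σ_{j=0}^{n−1} d(i', j). -/
/-- Case (2) of Lemma 3: if `(2h−1)·d(i',n−1) < (1/(n−1))·Σ_{m=0}^{n−2} d(i',m)`,
then the total distance from `n−1` is at most twice the total distance from `i'`. -/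
theorem stmt_9 (n h : ℕ) (hn : 2 ≤ n) (hh : 2 ≤ h)
    (d : ℕ → ℕ → ℝ)
    (hd0 : ∀ x < n, d x x = 0)
    (hdpos : ∀ x < n, ∀ y < n, x ≠ y → 0 < d x y)
    (hdsymm : ∀ x < n, ∀ y < n, d x y = d y x)
    (hdtri : ∀ x < n, ∀ y < n, ∀ z < n, d x z ≤ d x y + d y z)
    (i' : ℕ) (hi' : i' < n - 1)
    (hi'min : ∀ i < n - 1, ∑ j ∈ Finset.range n, d i' j ≤ ∑ j ∈ Finset.range n, d i j)
    (hcase : (2 * h - 1 : ℝ) * d i' (n - 1) <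
      (1 / ((n : ℝ) - 1)) * ∑ m ∈ Finset.range (n - 1), d i' m) :
    ∑ j ∈ Finset.range n, d (n - 1) j ≤ 2 * ∑ j ∈ Finset.range n, d i' j := by
  have hn1 : n - 1 < n := by omega
  have hi'n : i' < n := by omega
  have hnonneg : ∀ x < n, ∀ y < n, 0 ≤ d x y := by
    intro x hx y hy
    rcases eq_or_ne x y with rfl | hxy
    · exact le_of_eq (hd0 x hx).symm
    · exact (hdpos x hx y hy hxy).le
  set a := d i' (n - 1) with ha
  set S := ∑ m ∈ Finset.range (n - 1), d i' m with hS
  have ha0 : 0 ≤ a := hnonneg i' hi'n (n - 1) hn1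
  have hS0 : 0 ≤ S := Finset.sum_nonneg fun m hm =>
    hnonneg i' hi'n m (lt_trans (Finset.mem_range.mp hm) hn1)
  have hcast : ((n : ℝ) - 1) = ((n - 1 : ℕ) : ℝ) := by
    have : (1 : ℕ) ≤ n := by omega
    push_cast [this]
    ring
  have hnpos : (1 : ℝ) ≤ (n : ℝ) - 1 := by
    rw [hcast]
    exact_mod_cast (by omega : 1 ≤ n - 1)
  -- from hcase: ((n:ℝ)-1) * (2h-1) * a < S
  have hkey : ((n : ℝ) - 1) * ((2 * h - 1 : ℝ) * a) < S := by
    have h1 : (0 : ℝ) < (n : ℝ) - 1 := by linarith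
    have := (mul_lt_mul_iff_right₀ h1).mpr hcase
    rwa [show ((n : ℝ) - 1) * ((1 / ((n : ℝ) - 1)) * S) = S by field_simp] at this
  have h3 : (3 : ℝ) ≤ 2 * (h : ℝ) - 1 := by
    have : (2 : ℝ) ≤ (h : ℝ) := by exact_mod_cast hh
    linarith
  have hna : ((n : ℝ) - 1) * a ≤ S := by nlinarith
  -- split the sum for i'
  have hsplit : ∑ j ∈ Finset.range n, d i' j = S + a := by
    rw [hS, ha]
    rw [show n = (n - 1) + 1 by omega] at *
    simp [Finset.sum_range_succ]
  -- triangle bound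
  have htr : ∑ j ∈ Finset.range n, d (n - 1) j ≤
      ∑ j ∈ Finset.range n, (a + d i' j) := by
    apply Finset.sum_le_sum
    intro j hj
    have hj' : j < n := Finset.mem_range.mp hj
    have := hdtri (n - 1) hn1 i' hi'n j hj'
    have hsym := hdsymm (n - 1) hn1 i' hi'n
    rw [hsym] at this
    exact this
  have hsum : ∑ j ∈ Finset.range n, (a + d i' j) =
      (n : ℝ) * a + ∑ j ∈ Finset.range n, d i' j := by
    rw [Finset.sum_add_distrib, Finset.sum_const, Finset.card_range, nsmul_eq_mul]
  have hnaa : (n : ℝ) * a = ((n : ℝ) - 1) * a + a := by ring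
  linarith [htr, hsum, hsplit, hna]
end
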